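/- For every feasible point (z, λ) of program (lw1): the feasible set of program (lw) for G(λ) is nonempty, and f(0) − u(z,λ) ≤ G(λ)(0) − ρ(G(λ)) = G(λ)_gp. Consequently, with ρ ∈ [0,∞] the infimum of u over the feasible set of (lw1), f(0) − ρ ≤ s(f,g) (as elements of ℝ ∪ {±∞}). -/
import Mathlib


open MvPolynomial Finset

noncomputable section

/-- `Finset.filter` with classical decidability. -/
def pfilter {β : Type*} (s : Finset β) (q : β → Prop) : Finset β :=
  @Finset.filter β q (fun _ => Classical.propDecidable _) s

/-- `|α| := α₁ + ⋯ + αₙ` for a multi-index `α`. -/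
def adeg {n : ℕ} (α : Fin n →₀ ℕ) : ℕ := ∑ i, α i

/-- `Ω(p) := {α : |α| ≤ d, p_α ≠ 0, α ∉ {0, ε₁, …, εₙ}}`. -/
def OmegaSet {n : ℕ} (d : ℕ) (p : MvPolynomial (Fin n) ℝ) : Finset (Fin n →₀ ℕ) :=
  pfilter p.support (fun α => adeg α ≤ d ∧ α ≠ 0 ∧ ∀ i, α ≠ Finsupp.single i d)

/-- `Δ(p) := {α ∈ Ω(p) : p_α x^α is not a square}`. -/
def DelSet {n : ℕ} (d : ℕ) (p : MvPolynomial (Fin n) ℝ) : Finset (Fin n →₀ ℕ) :=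
  pfilter (OmegaSet d p)
    (fun α => ¬ IsSquare ((monomial α (p.coeff α)) : MvPolynomial (Fin n) ℝ))

/-- Feasibility for program (lw) for `p`. -/
def LwFeas {n : ℕ} (d : ℕ) (p : MvPolynomial (Fin n) ℝ)
    (z : (Fin n →₀ ℕ) → Fin n → ℝ) : Prop :=
  (∀ α ∈ DelSet d p, ∀ i, 0 ≤ z α i ∧ (z α i = 0 ↔ α i = 0)) ∧
  (∀ i, ∑ α ∈ DelSet d p, z α i ≤ p.coeff (Finsupp.single i d)) ∧
  (∀ α ∈ DelSet d p, adeg α = d →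
    ∏ i, (z α i / (α i : ℝ)) ^ (α i) = (p.coeff α / (d : ℝ)) ^ d)

/-- The objective function `v` of program (lw). -/
def lwObj {n : ℕ} (d : ℕ) (p : MvPolynomial (Fin n) ℝ)
    (z : (Fin n →₀ ℕ) → Fin n → ℝ) : ℝ :=
  ∑ α ∈ pfilter (DelSet d p) (fun α => adeg α < d),
    ((d : ℝ) - (adeg α : ℝ)) *
      (((p.coeff α / (d : ℝ)) ^ d * ∏ i, ((α i : ℝ) / z α i) ^ (α i)) ^
        ((1 : ℝ) / ((d : ℝ) - (adeg α : ℝ))))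

/-- `ρ(p) ∈ [0,∞]`, the infimum of `v` over the feasible set (`⊤` if infeasible). -/
def lwRho {n : ℕ} (d : ℕ) (p : MvPolynomial (Fin n) ℝ) : EReal :=
  sInf ((fun z => ((lwObj d p z : ℝ) : EReal)) '' {z | LwFeas d p z})

/-- `p_gp := p(0) − ρ(p) ∈ ℝ ∪ {−∞}`. -/
def lwGp {n : ℕ} (d : ℕ) (p : MvPolynomial (Fin n) ℝ) : EReal :=
  ((eval (0 : Fin n → ℝ) p : ℝ) : EReal) - lwRho d p

/-- `G(λ) := f − ∑ⱼ λⱼ gⱼ`. -/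
def polyG {n m : ℕ} (f : MvPolynomial (Fin n) ℝ) (g : Fin m → MvPolynomial (Fin n) ℝ)
    (lam : Fin m → ℝ) : MvPolynomial (Fin n) ℝ :=
  f - ∑ j, C (lam j) * g j

/-- `s(f,g) := sup{G(λ)_gp : λ ∈ [0,∞)^m}`. -/
def sBound {n m : ℕ} (d : ℕ) (f : MvPolynomial (Fin n) ℝ)
    (g : Fin m → MvPolynomial (Fin n) ℝ) : EReal :=
  sSup ((fun lam => lwGp d (polyG f g lam)) '' {lam : Fin m → ℝ | ∀ j, 0 ≤ lam j})


/-- `Δ := Δ(f) ∪ Δ(−g₁) ∪ ⋯ ∪ Δ(−g_m)`. -/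
def DelTot {n m : ℕ} (d : ℕ) (f : MvPolynomial (Fin n) ℝ)
    (g : Fin m → MvPolynomial (Fin n) ℝ) : Finset (Fin n →₀ ℕ) :=
  DelSet d f ∪ Finset.univ.biUnion (fun j => DelSet d (-(g j)))

/-- Feasibility for program (lw1). -/
def Lw1Feas {n m : ℕ} (d : ℕ) (f : MvPolynomial (Fin n) ℝ)
    (g : Fin m → MvPolynomial (Fin n) ℝ)
    (z : (Fin n →₀ ℕ) → Fin n → ℝ) (lam : Fin m → ℝ) : Prop :=
  (∀ j, 0 ≤ lam j) ∧
  (∀ α ∈ DelTot d f g, ∀ i, 0 ≤ z α i ∧ (z α i = 0 ↔ α i = 0)) ∧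
  (∀ i, ∑ α ∈ DelTot d f g, z α i ≤ (polyG f g lam).coeff (Finsupp.single i d)) ∧
  (∀ α ∈ DelTot d f g, adeg α = d →
    ((polyG f g lam).coeff α / (d : ℝ)) ^ d ≤ ∏ i, (z α i / (α i : ℝ)) ^ (α i))

/-- The objective function `u` of program (lw1). -/
def lw1Obj {n m : ℕ} (d : ℕ) (f : MvPolynomial (Fin n) ℝ)
    (g : Fin m → MvPolynomial (Fin n) ℝ)
    (z : (Fin n →₀ ℕ) → Fin n → ℝ) (lam : Fin m → ℝ) : ℝ :=
  (∑ j, lam j * eval (0 : Fin n → ℝ) (g j)) +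
  ∑ α ∈ pfilter (DelTot d f g) (fun α => adeg α < d),
    ((d : ℝ) - (adeg α : ℝ)) *
      ((((polyG f g lam).coeff α / (d : ℝ)) ^ d * ∏ i, ((α i : ℝ) / z α i) ^ (α i)) ^
        ((1 : ℝ) / ((d : ℝ) - (adeg α : ℝ))))

/-- The optimal value `ρ ∈ [0,∞]` of program (lw1) (`⊤` if infeasible). -/
def rho1 {n m : ℕ} (d : ℕ) (f : MvPolynomial (Fin n) ℝ)
    (g : Fin m → MvPolynomial (Fin n) ℝ) : EReal :=
  sInf ((fun t : ((Fin n →₀ ℕ) → Fin n → ℝ) × (Fin m → ℝ) =>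
      ((lw1Obj d f g t.1 t.2 : ℝ) : EReal)) '' {t | Lw1Feas d f g t.1 t.2})


/-- Membership in `pfilter`. -/
lemma mem_pfilter {β : Type*} {s : Finset β} {q : β → Prop} {a : β} :
    a ∈ pfilter s q ↔ a ∈ s ∧ q a :=
  @Finset.mem_filter β q (fun _ => Classical.propDecidable _) s a

lemma ereal_sub_sInf_le {a : ℝ} {S : Set EReal} {c : EReal}
    (h : ∀ b ∈ S, (a : EReal) - b ≤ c) : (a : EReal) - sInf S ≤ c := by
  rw [← EReal.le_of_forall_lt_iff_le]
  intro t hct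
  have hS : ∀ b ∈ S, ((a - t : ℝ) : EReal) ≤ b := by
    intro b hb
    have hab : (a : EReal) - b < (t : EReal) := lt_of_le_of_lt (h b hb) hct
    induction b using EReal.rec with
    | bot => rw [EReal.coe_sub_bot] at hab; exact absurd hab (by simp)
    | coe b =>
        rw [← EReal.coe_sub] at hab
        exact EReal.coe_le_coe_iff.mpr (by linarith [EReal.coe_lt_coe_iff.mp hab])
    | top => exact le_top
  calc (a : EReal) - sInf S ≤ (a : EReal) - ((a - t : ℝ) : EReal) :=
        EReal.sub_le_sub le_rfl (le_sInf hS)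
    _ = ((a - (a - t) : ℝ) : EReal) := (EReal.coe_sub _ _).symm
    _ = (t : EReal) := by norm_num

lemma coeff_polyG {n m : ℕ} (f : MvPolynomial (Fin n) ℝ)
    (g : Fin m → MvPolynomial (Fin n) ℝ) (lam : Fin m → ℝ) (α : Fin n →₀ ℕ) :
    (polyG f g lam).coeff α = f.coeff α - ∑ j, lam j * (g j).coeff α := by
  simp [polyG, MvPolynomial.coeff_sum]

lemma delG_subset {n m : ℕ} {d : ℕ} {f : MvPolynomial (Fin n) ℝ}
    {g : Fin m → MvPolynomial (Fin n) ℝ} (lam : Fin m → ℝ)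
    (hOf : OmegaSet d f = DelSet d f)
    (hOg : ∀ j, OmegaSet d (-(g j)) = DelSet d (-(g j))) :
    DelSet d (polyG f g lam) ⊆ DelTot d f g := by
  intro α hα
  rw [DelSet, mem_pfilter] at hα
  obtain ⟨hΩ, -⟩ := hα
  rw [OmegaSet, mem_pfilter, MvPolynomial.mem_support_iff] at hΩ
  obtain ⟨hG0, hcond⟩ := hΩ
  by_cases hf : f.coeff α ≠ 0
  · refine Finset.mem_union_left _ ?_
    rw [← hOf, OmegaSet, mem_pfilter]
    exact ⟨MvPolynomial.mem_support_iff.mpr hf, hcond⟩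
  · push_neg at hf
    have hex : ∃ j, (g j).coeff α ≠ 0 := by
      by_contra hg
      push_neg at hg
      apply hG0
      rw [coeff_polyG]
      simp [hf, hg]
    obtain ⟨j, hj⟩ := hex
    refine Finset.mem_union_right _ (Finset.mem_biUnion.mpr ⟨j, Finset.mem_univ j, ?_⟩)
    rw [← hOg j, OmegaSet, mem_pfilter]
    exact ⟨MvPolynomial.mem_support_iff.mpr (by simpa using hj), hcond⟩

/-- The sum part of the objective of (lw1). -/
def uSum {n m : ℕ} (d : ℕ) (f : MvPolynomial (Fin n) ℝ)
    (g : Fin m → MvPolynomial (Fin n) ℝ)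
    (z : (Fin n →₀ ℕ) → Fin n → ℝ) (lam : Fin m → ℝ) : ℝ :=
  ∑ α ∈ pfilter (DelTot d f g) (fun α => adeg α < d),
    ((d : ℝ) - (adeg α : ℝ)) *
      ((((polyG f g lam).coeff α / (d : ℝ)) ^ d * ∏ i, ((α i : ℝ) / z α i) ^ (α i)) ^
        ((1 : ℝ) / ((d : ℝ) - (adeg α : ℝ))))

lemma lw1Obj_eq {n m : ℕ} (d : ℕ) (f : MvPolynomial (Fin n) ℝ)
    (g : Fin m → MvPolynomial (Fin n) ℝ)
    (z : (Fin n →₀ ℕ) → Fin n → ℝ) (lam : Fin m → ℝ) :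
    lw1Obj d f g z lam = (∑ j, lam j * eval (0 : Fin n → ℝ) (g j)) + uSum d f g z lam := rfl

lemma key_lemma {n m : ℕ} {d : ℕ} {f : MvPolynomial (Fin n) ℝ}
    {g : Fin m → MvPolynomial (Fin n) ℝ}
    (hd2 : 2 ≤ d) (hde : Even d)
    (hOf : OmegaSet d f = DelSet d f)
    (hOg : ∀ j, OmegaSet d (-(g j)) = DelSet d (-(g j)))
    (z : (Fin n →₀ ℕ) → Fin n → ℝ) (lam : Fin m → ℝ)
    (h : Lw1Feas d f g z lam) :
    ∃ z', LwFeas d (polyG f g lam) z' ∧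
      lwObj d (polyG f g lam) z' ≤ uSum d f g z lam := by
  classical
  obtain ⟨hlam, hz, hbud, hcon⟩ := h
  set G := polyG f g lam with hGdef
  have hsub : DelSet d G ⊆ DelTot d f g := delG_subset lam hOf hOg
  have hdR : (0 : ℝ) < (d : ℝ) := by exact_mod_cast (by omega : 0 < d)
  set L : (Fin n →₀ ℕ) → ℝ := fun α => ∏ i, (z α i / (α i : ℝ)) ^ (α i) with hLdef
  set c : (Fin n →₀ ℕ) → ℝ := fun α =>
    if adeg α = d ∧ α ∈ DelSet d G then
      (((G.coeff α / (d : ℝ)) ^ d) / L α) ^ ((d : ℝ)⁻¹) else 1 with hcdef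
  have hzsgn : ∀ α ∈ DelSet d G, ∀ i, 0 ≤ z α i ∧ (z α i = 0 ↔ α i = 0) :=
    fun α hα i => hz α (hsub hα) i
  have hLpos : ∀ α ∈ DelSet d G, 0 < L α := by
    intro α hα
    refine Finset.prod_pos fun i _ => ?_
    rcases Nat.eq_zero_or_pos (α i) with h0 | hpos
    · simp [h0]
    · have hzpos : 0 < z α i := by
        rcases hzsgn α hα i with ⟨h1, h2⟩
        rcases h1.lt_or_eq with hlt | heq
        · exact hlt
        · exact absurd (h2.mp heq.symm) hpos.ne'
      exact pow_pos (div_pos hzpos (by exact_mod_cast hpos)) _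
  have hGne : ∀ α ∈ DelSet d G, G.coeff α ≠ 0 := by
    intro α hα
    rw [DelSet, mem_pfilter, OmegaSet, mem_pfilter, MvPolynomial.mem_support_iff] at hα
    exact hα.1.1
  have hRpos : ∀ α ∈ DelSet d G, 0 < (G.coeff α / (d : ℝ)) ^ d := fun α hα =>
    hde.pow_pos (div_ne_zero (hGne α hα) hdR.ne')
  have hcpos : ∀ α, 0 < c α := by
    intro α
    rw [hcdef]; dsimp only
    split_ifs with hif
    · exact Real.rpow_pos_of_pos (div_pos (hRpos α hif.2) (hLpos α hif.2)) _
    · norm_num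
  have hcle : ∀ α, c α ≤ 1 := by
    intro α
    rw [hcdef]; dsimp only
    split_ifs with hif
    · refine Real.rpow_le_one (le_of_lt (div_pos (hRpos α hif.2) (hLpos α hif.2)))
        ?_ (by positivity)
      rw [div_le_one (hLpos α hif.2)]
      exact hcon α (hsub hif.2) hif.1
    · exact le_rfl
  refine ⟨fun α i => c α * z α i, ⟨?_, ?_, ?_⟩, ?_⟩
  · intro α hα i
    refine ⟨mul_nonneg (hcpos α).le (hzsgn α hα i).1, ?_⟩
    rw [mul_eq_zero]
    constructor
    · rintro (hc | hz0)
      · exact absurd hc (hcpos α).ne'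
      · exact (hzsgn α hα i).2.mp hz0
    · intro h0; exact Or.inr ((hzsgn α hα i).2.mpr h0)
  · intro i
    calc ∑ α ∈ DelSet d G, c α * z α i ≤ ∑ α ∈ DelSet d G, z α i := by
          refine Finset.sum_le_sum fun α hα => ?_
          exact mul_le_of_le_one_left (hzsgn α hα i).1 (hcle α)
      _ ≤ ∑ α ∈ DelTot d f g, z α i :=
          Finset.sum_le_sum_of_subset_of_nonneg hsub (fun α hα _ => (hz α hα i).1)
      _ ≤ G.coeff (Finsupp.single i d) := hbud i
  · intro α hα hαd
    have hL := hLpos α hα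
    have hR := hRpos α hα
    have hprd : ∀ i ∈ (Finset.univ : Finset (Fin n)),
        (c α * z α i / (α i : ℝ)) ^ (α i)
          = c α ^ (α i) * (z α i / (α i : ℝ)) ^ (α i) := by
      intro i _; rw [mul_div_assoc, mul_pow]
    rw [Finset.prod_congr rfl hprd, Finset.prod_mul_distrib,
      Finset.prod_pow_eq_pow_sum]
    have hLa : ∏ i, (z α i / (α i : ℝ)) ^ (α i) = L α := rfl
    rw [hLa]
    have hsum : ∑ i, α i = d := hαd
    rw [hsum]
    have hcval : c α = (((G.coeff α / (d : ℝ)) ^ d) / L α) ^ ((d : ℝ)⁻¹) := by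
      rw [hcdef]; exact if_pos ⟨hαd, hα⟩
    rw [hcval, ← Real.rpow_natCast ((((G.coeff α / (d : ℝ)) ^ d) / L α) ^ ((d : ℝ)⁻¹)) d,
      ← Real.rpow_mul (by positivity), inv_mul_cancel₀ hdR.ne', Real.rpow_one]
    exact div_mul_cancel₀ _ hL.ne'
  · rw [lwObj, uSum]
    have hstep : ∀ α ∈ pfilter (DelSet d G) (fun α => adeg α < d),
        ((d : ℝ) - (adeg α : ℝ)) *
          (((G.coeff α / (d : ℝ)) ^ d * ∏ i, ((α i : ℝ) / (c α * z α i)) ^ (α i)) ^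
            ((1 : ℝ) / ((d : ℝ) - (adeg α : ℝ))))
        = ((d : ℝ) - (adeg α : ℝ)) *
          (((G.coeff α / (d : ℝ)) ^ d * ∏ i, ((α i : ℝ) / z α i) ^ (α i)) ^
            ((1 : ℝ) / ((d : ℝ) - (adeg α : ℝ)))) := by
      intro α hα
      rw [mem_pfilter] at hα
      have hc1 : c α = 1 := by
        rw [hcdef]; exact if_neg (fun hcon' => absurd hcon'.1 (Nat.ne_of_lt hα.2))
      simp [hc1]
    rw [Finset.sum_congr rfl hstep]
    refine Finset.sum_le_sum_of_subset_of_nonneg ?_ ?_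
    · intro α hα
      rw [mem_pfilter] at hα ⊢
      exact ⟨hsub hα.1, hα.2⟩
    · intro α hα _
      rw [mem_pfilter] at hα
      have h1 : (0 : ℝ) ≤ (d : ℝ) - (adeg α : ℝ) := by
        have := hα.2
        have : (adeg α : ℝ) ≤ (d : ℝ) := by exact_mod_cast this.le
        linarith
      refine mul_nonneg h1 (Real.rpow_nonneg ?_ _)
      refine mul_nonneg (hde.pow_nonneg _) (Finset.prod_nonneg fun i _ => ?_)
      exact pow_nonneg (div_nonneg (Nat.cast_nonneg _) (hz α hα.1 i).1) _

/-- For every feasible point `(z,λ)` of (lw1), the program (lw) for `G(λ)` is feasible and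
`f(0) − u(z,λ) ≤ G(λ)_gp`; consequently `f(0) − ρ ≤ s(f,g)`. -/
theorem stmt4 {n m : ℕ} (hn : 1 ≤ n) (d : ℕ)
    (f : MvPolynomial (Fin n) ℝ) (g : Fin m → MvPolynomial (Fin n) ℝ)
    (hd2 : 2 ≤ d) (hde : Even d) (hdf : f.totalDegree ≤ d)
    (hdg : ∀ j, (g j).totalDegree ≤ d)
    (hdLeast : ∀ d' : ℕ, Even d' → 2 ≤ d' → f.totalDegree ≤ d' →
      (∀ j, (g j).totalDegree ≤ d') → d ≤ d')
    (hOf : OmegaSet d f = DelSet d f)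
    (hOg : ∀ j, OmegaSet d (-(g j)) = DelSet d (-(g j))) :
    (∀ z lam, Lw1Feas d f g z lam →
      (∃ z', LwFeas d (polyG f g lam) z') ∧
      (((eval (0 : Fin n → ℝ) f - lw1Obj d f g z lam : ℝ) : EReal) ≤
        lwGp d (polyG f g lam))) ∧
    ((eval (0 : Fin n → ℝ) f : ℝ) : EReal) - rho1 d f g ≤ sBound d f g := by
  classical
  have h1 : ∀ z lam, Lw1Feas d f g z lam →
      (∃ z', LwFeas d (polyG f g lam) z') ∧
      (((eval (0 : Fin n → ℝ) f - lw1Obj d f g z lam : ℝ) : EReal) ≤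
        lwGp d (polyG f g lam)) := by
    intro z lam h
    obtain ⟨z', hfeas, hobj⟩ := key_lemma hd2 hde hOf hOg z lam h
    refine ⟨⟨z', hfeas⟩, ?_⟩
    have hrho : lwRho d (polyG f g lam) ≤ ((lwObj d (polyG f g lam) z' : ℝ) : EReal) :=
      sInf_le ⟨z', hfeas, rfl⟩
    have heval : eval (0 : Fin n → ℝ) (polyG f g lam)
        = eval (0 : Fin n → ℝ) f - ∑ j, lam j * eval (0 : Fin n → ℝ) (g j) := by
      simp [polyG]
    have hreal : eval (0 : Fin n → ℝ) f - lw1Obj d f g z lam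
        = eval (0 : Fin n → ℝ) (polyG f g lam) - uSum d f g z lam := by
      rw [heval, lw1Obj_eq]; ring
    rw [lwGp, hreal, EReal.coe_sub]
    refine EReal.sub_le_sub le_rfl (le_trans hrho ?_)
    exact EReal.coe_le_coe_iff.mpr (le_trans hobj le_rfl)
  refine ⟨h1, ?_⟩
  rw [rho1]
  refine ereal_sub_sInf_le ?_
  rintro b ⟨⟨z, lam⟩, hfeas, rfl⟩
  rw [← EReal.coe_sub]
  refine le_trans ((h1 z lam hfeas).2) ?_
  rw [sBound]
  exact le_sSup ⟨lam, hfeas.1, rfl⟩
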